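/- For every complex z with |z| ≤ 1 and z ≠ 1, z²·γ(z) = z + (1−z)·log(1−z) − ∑_{k=2}^∞ (Li_k(z) − z)/k. -/

import Mathlib

open Complex Filter Topology

private lemma my_shift1 {f : ℕ → ℂ} {a : ℂ} (h : HasSum f a) :
    HasSum (fun n : ℕ => f (n + 1)) (a - f 0) := by
  refine (hasSum_nat_add_iff (f := f) 1).mpr ?_
  simpa using h

private lemma my_hn2c (n : ℕ) : ((n : ℂ) + 1) * ((n : ℂ) + 2) = (((n+1)*(n+2) : ℕ) : ℂ) := by
  push_cast; ring

private lemma my_ne1 (n : ℕ) : ((n : ℂ) + 1) ≠ 0 := Nat.cast_add_one_ne_zero n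

private lemma my_ne2 (n : ℕ) : ((n : ℂ) + 2) ≠ 0 := by
  have : ((n + 2 : ℕ) : ℂ) ≠ 0 := Nat.cast_ne_zero.mpr (by omega)
  push_cast at this; exact this

private lemma my_L0 (w : ℂ) (hw : ‖w‖ < 1) :
    HasSum (fun n : ℕ => w ^ (n + 2) / ((n : ℂ) + 2)) (-Complex.log (1 - w) - w) := by
  have h1 := Complex.hasSum_taylorSeries_neg_log hw
  have h2 := my_shift1 (my_shift1 h1)
  have hfun : (fun n : ℕ => w ^ (n + 1 + 1) / ((n : ℕ) + 1 + 1 : ℕ))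
      = fun n : ℕ => w ^ (n + 2) / ((n : ℂ) + 2) := by
    funext n; push_cast; ring_nf
  rw [hfun] at h2
  convert h2 using 1
  norm_num

private lemma my_L1 (w : ℂ) (hw : ‖w‖ < 1) :
    HasSum (fun n : ℕ => w ^ (n + 2) / (((n : ℂ) + 1) * ((n : ℂ) + 2)))
      (w + (1 - w) * Complex.log (1 - w)) := by
  have h1 := Complex.hasSum_taylorSeries_neg_log hw
  have h2 : HasSum (fun n : ℕ => w ^ (n + 1) / ((n : ℂ) + 1)) (-Complex.log (1 - w)) := by
    have h := my_shift1 h1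
    have hfun : (fun n : ℕ => w ^ (n + 1) / ((n : ℕ) + 1 : ℕ))
        = fun n : ℕ => w ^ (n + 1) / ((n : ℂ) + 1) := by
      funext n; push_cast; ring_nf
    rw [hfun] at h
    convert h using 1
    norm_num
  have h3 := my_L0 w hw
  have h4 : HasSum (fun n : ℕ => w ^ (n + 2) / ((n : ℂ) + 1)) (-(w * Complex.log (1 - w))) := by
    have h := h2.mul_left w
    have hfun : (fun n : ℕ => w * (w ^ (n + 1) / ((n : ℂ) + 1)))
        = fun n : ℕ => w ^ (n + 2) / ((n : ℂ) + 1) := by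
      funext n; ring
    rw [hfun] at h
    convert h using 1
    · rfl
    ring
  have h5 := h4.sub h3
  have hfun : (fun n : ℕ => w ^ (n + 2) / ((n : ℂ) + 1) - w ^ (n + 2) / ((n : ℂ) + 2))
      = fun n : ℕ => w ^ (n + 2) / (((n : ℂ) + 1) * ((n : ℂ) + 2)) := by
    funext n
    have hn1 := my_ne1 n
    have hn2 := my_ne2 n
    field_simp
    ring
  rw [hfun] at h5
  convert h5 using 1
  · rfl
  ring

private lemma my_Usummable : Summable (fun n : ℕ => 1 / (((n:ℝ)+1)*((n:ℝ)+2))) := by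
  have h : Summable (fun n : ℕ => 1 / ((n:ℝ)+1)^2) := by
    have h2 : Summable (fun n : ℕ => 1 / ((n:ℝ))^2) := by
      simpa using Real.summable_one_div_nat_pow.mpr (le_refl 2)
    have := (summable_nat_add_iff 1).mpr h2
    simpa using this
  refine h.of_nonneg_of_le (fun n => by positivity) (fun n => ?_)
  apply div_le_div_of_nonneg_left (by norm_num) (by positivity)
  nlinarith [sq_nonneg ((n:ℝ)+1)]

private lemma my_normBound (w : ℂ) (hw : ‖w‖ ≤ 1) (n : ℕ) :
    ‖w ^ (n + 2) / (((n : ℂ) + 1) * ((n : ℂ) + 2))‖ ≤ 1 / (((n:ℝ)+1)*((n:ℝ)+2)) := by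
  rw [norm_div, my_hn2c, Complex.norm_natCast]
  have h1 : ‖w ^ (n+2)‖ ≤ 1 := by
    rw [norm_pow]; exact pow_le_one₀ (norm_nonneg w) hw
  have h2 : (((n+1)*(n+2) : ℕ) : ℝ) = ((n:ℝ)+1)*((n:ℝ)+2) := by push_cast; ring
  rw [h2]
  exact div_le_div_of_nonneg_right h1 (by positivity) |>.trans_eq rfl

private lemma my_slit (z : ℂ) (hz : ‖z‖ ≤ 1) (hz1 : z ≠ 1) : 1 - z ∈ Complex.slitPlane := by
  rw [Complex.mem_slitPlane_iff]
  rcases lt_or_ge z.re 1 with h | h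
  · left; simpa [Complex.sub_re] using by linarith
  · exfalso
    have hre : |z.re| ≤ ‖z‖ := Complex.abs_re_le_norm z
    have h1 : z.re = 1 := le_antisymm (by cases abs_le.mp (hre.trans hz); linarith) h
    have h2 : z.re ^ 2 + z.im ^ 2 ≤ 1 := by
      have h3 := Complex.sq_norm z
      rw [Complex.normSq_apply] at h3
      have : ‖z‖ ≤ 1 := hz
      nlinarith [norm_nonneg z]
    have him : z.im = 0 := by nlinarith [sq_nonneg z.im]
    exact hz1 (Complex.ext (by simp [h1]) (by simp [him]))

private lemma my_L2 (z : ℂ) (hz : ‖z‖ ≤ 1) (hz1 : z ≠ 1) :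
    HasSum (fun n : ℕ => z ^ (n + 2) / (((n : ℂ) + 1) * ((n : ℂ) + 2)))
      (z + (1 - z) * Complex.log (1 - z)) := by
  set F : ℂ → ℂ := fun w => ∑' n : ℕ, w ^ (n + 2) / (((n : ℂ) + 1) * ((n : ℂ) + 2)) with hF
  have hsum : Summable (fun n : ℕ => z ^ (n + 2) / (((n : ℂ) + 1) * ((n : ℂ) + 2))) :=
    Summable.of_norm (my_Usummable.of_nonneg_of_le (fun n => norm_nonneg _) (my_normBound z hz))
  suffices hFz : F z = z + (1 - z) * Complex.log (1 - z) by
    rw [← hFz]; exact hsum.hasSum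
  have hCont : ContinuousOn F (Metric.closedBall (0:ℂ) 1) := by
    refine continuousOn_tsum (fun n => (Continuous.continuousOn (by fun_prop))) my_Usummable
      (fun n x hx => my_normBound x (by simpa [Metric.mem_closedBall, dist_eq_norm] using hx) n)
  have hint : ∀ w : ℂ, ‖w‖ < 1 → F w = w + (1 - w) * Complex.log (1 - w) :=
    fun w hw => (my_L1 w hw).tsum_eq
  have hGcont : ContinuousAt (fun w : ℂ => w + (1 - w) * Complex.log (1 - w)) z := by
    have hlog : ContinuousAt (fun w : ℂ => Complex.log (1 - w)) z :=
      ContinuousAt.clog (by fun_prop) (my_slit z hz hz1)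
    fun_prop
  have hpath : Tendsto (fun r : ℝ => (r:ℂ) * z) (𝓝[<] (1:ℝ)) (𝓝[Metric.closedBall (0:ℂ) 1] z) := by
    apply tendsto_nhdsWithin_of_tendsto_nhds_of_eventually_within
    · have hc : Continuous (fun r : ℝ => (r:ℂ) * z) := by fun_prop
      have : Tendsto (fun r : ℝ => (r:ℂ) * z) (𝓝 (1:ℝ)) (𝓝 (((1:ℝ):ℂ) * z)) := hc.tendsto 1
      simpa using this.mono_left nhdsWithin_le_nhds
    · filter_upwards [Ioo_mem_nhdsLT_of_mem (show (1:ℝ) ∈ Set.Ioc 0 1 from ⟨by norm_num, le_refl _⟩)]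
        with r hr
      simp only [Metric.mem_closedBall, dist_zero_right, norm_mul, Complex.norm_real]
      calc |r| * ‖z‖ ≤ 1 * 1 := by
            apply mul_le_mul _ hz (norm_nonneg z) zero_le_one
            rw [abs_le]; constructor <;> [linarith [hr.1]; linarith [hr.2]]
        _ = 1 := by norm_num
  have hsmall : ∀ᶠ r : ℝ in 𝓝[<] (1:ℝ), ‖(r:ℂ) * z‖ < 1 := by
    filter_upwards [Ioo_mem_nhdsLT_of_mem (show (1:ℝ) ∈ Set.Ioc 0 1 from ⟨by norm_num, le_refl _⟩)]
      with r hr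
    rw [norm_mul, Complex.norm_real]
    calc |r| * ‖z‖ ≤ |r| * 1 := mul_le_mul_of_nonneg_left hz (abs_nonneg r)
      _ < 1 := by rw [mul_one, abs_lt]; exact ⟨by linarith [hr.1], hr.2⟩
  have hFlim : Tendsto (fun r : ℝ => F ((r:ℂ) * z)) (𝓝[<] (1:ℝ)) (𝓝 (F z)) :=
    ((hCont z (by simpa [Metric.mem_closedBall, dist_eq_norm] using hz)).tendsto).comp hpath
  have hGlim : Tendsto (fun r : ℝ => F ((r:ℂ) * z)) (𝓝[<] (1:ℝ))
      (𝓝 (z + (1 - z) * Complex.log (1 - z))) := by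
    have h1 : Tendsto (fun r : ℝ => ((r:ℂ)*z) + (1 - (r:ℂ)*z) * Complex.log (1 - (r:ℂ)*z))
        (𝓝[<] (1:ℝ)) (𝓝 (z + (1 - z) * Complex.log (1 - z))) := by
      have : Tendsto (fun r : ℝ => (r:ℂ) * z) (𝓝[<] (1:ℝ)) (𝓝 z) :=
        hpath.mono_right nhdsWithin_le_nhds
      exact hGcont.tendsto.comp this
    refine h1.congr' ?_
    filter_upwards [hsmall] with r hr
    exact (hint _ hr).symm
  exact tendsto_nhds_unique hFlim hGlim

-- real log inequalities
private lemma my_logIneq (n : ℕ) :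
    0 ≤ 1/((n:ℝ)+1) - Real.log (((n:ℝ)+2)/((n:ℝ)+1)) ∧
    1/((n:ℝ)+1) - Real.log (((n:ℝ)+2)/((n:ℝ)+1)) ≤ 1/(((n:ℝ)+1)*((n:ℝ)+2)) := by
  have hn1 : (0:ℝ) < (n:ℝ)+1 := by positivity
  have hn2 : (0:ℝ) < (n:ℝ)+2 := by positivity
  have hx : (0:ℝ) < ((n:ℝ)+2)/((n:ℝ)+1) := by positivity
  have h1 := Real.log_le_sub_one_of_pos hx
  have h2 := Real.one_sub_inv_le_log_of_pos hx
  have e1 : ((n:ℝ)+2)/((n:ℝ)+1) - 1 = 1/((n:ℝ)+1) := by field_simp; ring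
  have e2 : (((n:ℝ)+2)/((n:ℝ)+1))⁻¹ = ((n:ℝ)+1)/((n:ℝ)+2) := by rw [inv_div]
  have e3 : (1:ℝ) - ((n:ℝ)+1)/((n:ℝ)+2) = 1/((n:ℝ)+2) := by field_simp; ring
  have e4 : 1/((n:ℝ)+1) - 1/((n:ℝ)+2) = 1/(((n:ℝ)+1)*((n:ℝ)+2)) := by
    field_simp; ring
  constructor
  · linarith [e1 ▸ h1]
  · rw [e2, e3] at h2; linarith

private lemma my_coeff (n : ℕ) :
    ((1:ℂ)/((n:ℂ)+1) - ((Real.log (((n:ℝ)+2)/((n:ℝ)+1)) : ℝ) : ℂ))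
      = (((1/((n:ℝ)+1) - Real.log (((n:ℝ)+2)/((n:ℝ)+1))) : ℝ) : ℂ) := by
  push_cast; ring

private lemma my_gammaSummable (z : ℂ) (hz : ‖z‖ ≤ 1) :
    Summable (fun n : ℕ =>
      z ^ n * ((1:ℂ)/((n:ℂ)+1) - ((Real.log (((n:ℝ)+2)/((n:ℝ)+1)) : ℝ) : ℂ))) := by
  apply Summable.of_norm
  refine my_Usummable.of_nonneg_of_le (fun n => norm_nonneg _) (fun n => ?_)
  rw [norm_mul, my_coeff, Complex.norm_real]
  have h1 : ‖z ^ n‖ ≤ 1 := by rw [norm_pow]; exact pow_le_one₀ (norm_nonneg z) hz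
  have h2 := my_logIneq n
  calc ‖z ^ n‖ * ‖(1/((n:ℝ)+1) - Real.log (((n:ℝ)+2)/((n:ℝ)+1)))‖
      ≤ 1 * |1/((n:ℝ)+1) - Real.log (((n:ℝ)+2)/((n:ℝ)+1))| := by
        exact mul_le_mul_of_nonneg_right h1 (norm_nonneg _)
    _ ≤ 1/(((n:ℝ)+1)*((n:ℝ)+2)) := by
        rw [one_mul, _root_.abs_of_nonneg h2.1]; exact h2.2

private lemma my_wnorm (n : ℕ) : ‖(1:ℂ)/((n:ℂ)+2)‖ = 1/((n:ℝ)+2) := by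
  rw [norm_div, norm_one]
  have h : ((n:ℂ)+2) = ((n+2:ℕ):ℂ) := by push_cast; ring
  rw [h, Complex.norm_natCast]
  push_cast; ring

private lemma my_wlt (n : ℕ) : ‖(1:ℂ)/((n:ℂ)+2)‖ < 1 := by
  rw [my_wnorm]
  rw [div_lt_one (by positivity)]
  linarith [Nat.cast_nonneg (α := ℝ) n]

private lemma my_Inner (z : ℂ) (n : ℕ) :
    HasSum (fun k : ℕ => z ^ (n+2) * (((1:ℂ)/((n:ℂ)+2)) ^ (k + 2) / ((k:ℂ)+2)))
      (z ^ (n+2) * (((Real.log (((n:ℝ)+2)/((n:ℝ)+1)) : ℝ) : ℂ) - (1:ℂ)/((n:ℂ)+2))) := by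
  have h0 := (my_L0 ((1:ℂ)/((n:ℂ)+2)) (my_wlt n)).mul_left (z ^ (n+2))
  have hval : -Complex.log (1 - (1:ℂ)/((n:ℂ)+2)) - (1:ℂ)/((n:ℂ)+2)
      = ((Real.log (((n:ℝ)+2)/((n:ℝ)+1)) : ℝ) : ℂ) - (1:ℂ)/((n:ℂ)+2) := by
    have hn2 := my_ne2 n
    have h1 : (1:ℂ) - (1:ℂ)/((n:ℂ)+2) = ((((n:ℝ)+1)/((n:ℝ)+2) : ℝ) : ℂ) := by
      push_cast; field_simp; ring
    have h2 : Complex.log ((((((n:ℝ)+1)/((n:ℝ)+2)) : ℝ) : ℂ))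
        = ((Real.log (((n:ℝ)+1)/((n:ℝ)+2)) : ℝ) : ℂ) :=
      (Complex.ofReal_log (by positivity)).symm
    have h3 : Real.log (((n:ℝ)+1)/((n:ℝ)+2)) = - Real.log (((n:ℝ)+2)/((n:ℝ)+1)) := by
      rw [← Real.log_inv, inv_div]
    rw [h1, h2, h3]
    push_cast; ring
  rw [hval] at h0
  exact h0

private lemma my_gsq : Summable (fun n : ℕ => (1/((n:ℝ)+2))^2) := by
  have h2 : Summable (fun n : ℕ => 1 / ((n:ℝ))^2) := by
    simpa using Real.summable_one_div_nat_pow.mpr (le_refl 2)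
  have := (summable_nat_add_iff 2).mpr h2
  apply this.congr
  intro n
  rw [div_pow, one_pow]
  push_cast; ring_nf

set_option maxHeartbeats 1000000 in
private lemma my_aaSummable (z : ℂ) (hz : ‖z‖ ≤ 1) :
    Summable (fun p : ℕ × ℕ =>
      z ^ (p.2+2) * (((1:ℂ)/((p.2:ℂ)+2)) ^ (p.1 + 2) / ((p.1:ℂ)+2))) := by
  apply Summable.of_norm
  have hb : Summable (fun p : ℕ × ℕ => ((1:ℝ)/2)^p.1 * (1/((p.2:ℝ)+2))^2) := by
    have h1 : Summable (fun k : ℕ => ((1:ℝ)/2)^k) :=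
      summable_geometric_of_lt_one (by norm_num) (by norm_num)
    exact h1.mul_of_nonneg my_gsq (fun k => by positivity) (fun n => by positivity)
  refine hb.of_nonneg_of_le (fun p => norm_nonneg _) (fun p => ?_)
  obtain ⟨k, n⟩ := p
  simp only
  rw [norm_mul, norm_div, norm_pow, norm_pow, my_wnorm]
  have hz2 : ‖z‖ ^ (n+2) ≤ 1 := pow_le_one₀ (norm_nonneg z) hz
  have hk : (1:ℝ) ≤ ‖((k:ℂ)+2)‖ := by
    have h : ((k:ℂ)+2) = ((k+2:ℕ):ℂ) := by push_cast; ring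
    rw [h, Complex.norm_natCast]
    exact_mod_cast Nat.le_add_left 1 (k+1)
  have hd : (1/((n:ℝ)+2)) ^ (k + 2) / ‖((k:ℂ)+2)‖ ≤ (1/((n:ℝ)+2)) ^ (k + 2) := by
    apply div_le_self (by positivity) hk
  calc ‖z‖ ^ (n+2) * ((1/((n:ℝ)+2)) ^ (k + 2) / ‖((k:ℂ)+2)‖)
      ≤ 1 * ((1/((n:ℝ)+2)) ^ (k + 2)) := by
        apply mul_le_mul hz2 hd (by positivity) zero_le_one
    _ = (1/((n:ℝ)+2)) ^ k * (1/((n:ℝ)+2)) ^ 2 := by rw [one_mul, ← pow_add]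
    _ ≤ ((1:ℝ)/2)^k * (1/((n:ℝ)+2))^2 := by
        apply mul_le_mul_of_nonneg_right _ (by positivity)
        apply pow_le_pow_left₀ (by positivity) _ k
        rw [div_le_div_iff₀ (by positivity) (by norm_num)]
        linarith [Nat.cast_nonneg (α := ℝ) n]

private lemma my_sq1 : Summable (fun n : ℕ => 1 / ((n:ℝ)+1)^2) := by
  have h2 : Summable (fun n : ℕ => 1 / ((n:ℝ))^2) := by
    simpa using Real.summable_one_div_nat_pow.mpr (le_refl 2)
  have := (summable_nat_add_iff 1).mpr h2
  simpa using this

private lemma my_liSummable (z : ℂ) (hz : ‖z‖ ≤ 1) (k : ℕ) :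
    Summable (fun n : ℕ => z ^ (n + 1) / ((n:ℂ)+1) ^ (k + 2)) := by
  apply Summable.of_norm
  refine my_sq1.of_nonneg_of_le (fun n => norm_nonneg _) (fun n => ?_)
  rw [norm_div, norm_pow, norm_pow]
  have h1 : ‖z‖ ^ (n+1) ≤ 1 := pow_le_one₀ (norm_nonneg z) hz
  have h2 : ‖((n:ℂ)+1)‖ = (n:ℝ)+1 := by
    have h : ((n:ℂ)+1) = ((n+1:ℕ):ℂ) := by push_cast; ring
    rw [h, Complex.norm_natCast]; push_cast; ring
  rw [h2]
  have h3 : ((n:ℝ)+1)^2 ≤ ((n:ℝ)+1)^(k+2) := by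
    apply pow_le_pow_right₀ (by linarith [Nat.cast_nonneg (α := ℝ) n]) (by omega)
  calc ‖z‖^(n+1) / ((n:ℝ)+1)^(k+2) ≤ 1 / ((n:ℝ)+1)^(k+2) := by
        apply div_le_div_of_nonneg_right h1 (by positivity) |>.trans_eq rfl
    _ ≤ 1 / ((n:ℝ)+1)^2 := by
        apply div_le_div_of_nonneg_left (by norm_num) (by positivity) h3

theorem stmt_6 (z : ℂ) (hz : ‖z‖ ≤ 1) (hz1 : z ≠ 1) :
    HasSum (fun k : ℕ =>
        ((∑' n : ℕ, z ^ (n + 1) / (n + 1) ^ (k + 2)) - z) / (k + 2))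
      (z + (1 - z) * Complex.log (1 - z)
        - z ^ 2 * ∑' n : ℕ,
            z ^ n * ((1 : ℂ) / (n + 1) - (Real.log ((n + 2) / (n + 1)) : ℂ))) := by
  have hzn : ‖z‖ ≤ 1 := hz
  set c : ℕ → ℂ :=
    fun n => (1:ℂ)/((n:ℂ)+1) - ((Real.log (((n:ℝ)+2)/((n:ℝ)+1)) : ℝ) : ℂ) with hc
  have hγ : HasSum (fun n : ℕ => z ^ (n+2) * c n) (z ^ 2 * ∑' n : ℕ, z ^ n * c n) := by
    have h := ((my_gammaSummable z hzn).hasSum).mul_left (z ^ 2)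
    have hfun : (fun n : ℕ => z ^ 2 * (z ^ n * c n)) = fun n : ℕ => z ^ (n+2) * c n :=
      funext fun n => by ring
    rw [← hfun]; exact h
  have hQ : HasSum (fun n : ℕ =>
      z ^ (n+2) * (((Real.log (((n:ℝ)+2)/((n:ℝ)+1)) : ℝ) : ℂ) - (1:ℂ)/((n:ℂ)+2)))
      (z + (1 - z) * Complex.log (1 - z) - z ^ 2 * ∑' n : ℕ, z ^ n * c n) := by
    have h := (my_L2 z hzn hz1).sub hγ
    have hfun : (fun n : ℕ => z ^ (n + 2) / (((n : ℂ) + 1) * ((n : ℂ) + 2)) - z ^ (n+2) * c n)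
        = fun n : ℕ =>
          z ^ (n+2) * (((Real.log (((n:ℝ)+2)/((n:ℝ)+1)) : ℝ) : ℂ) - (1:ℂ)/((n:ℂ)+2)) := by
      funext n
      rw [hc]
      have hn1 := my_ne1 n
      have hn2 := my_ne2 n
      field_simp
      ring
    rw [hfun] at h
    exact h
  set b : ℕ × ℕ → ℂ :=
    fun p => z ^ (p.2+2) * (((1:ℂ)/((p.2:ℂ)+2)) ^ (p.1 + 2) / ((p.1:ℂ)+2)) with hbdef
  have hb : Summable b := my_aaSummable z hzn
  have hbs : Summable (fun p : ℕ × ℕ => b p.swap) := hb.prod_symm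
  have H1 : HasSum (fun n : ℕ =>
      z ^ (n+2) * (((Real.log (((n:ℝ)+2)/((n:ℝ)+1)) : ℝ) : ℂ) - (1:ℂ)/((n:ℂ)+2)))
      (∑' p : ℕ × ℕ, b p.swap) :=
    hbs.hasSum.prod_fiberwise (fun n => my_Inner z n)
  have hTeq : (z + (1 - z) * Complex.log (1 - z) - z ^ 2 * ∑' n : ℕ, z ^ n * c n)
      = ∑' p : ℕ × ℕ, b p.swap := hQ.unique H1
  have hswap : ∑' p : ℕ × ℕ, b p.swap = ∑' p : ℕ × ℕ, b p :=
    (Equiv.prodComm ℕ ℕ).tsum_eq b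
  have H2 : HasSum (fun k : ℕ => ∑' n : ℕ, b (k, n)) (∑' p : ℕ × ℕ, b p) :=
    hb.hasSum.prod_fiberwise (fun k => (hb.prod_factor k).hasSum)
  have hfk : (fun k : ℕ => ((∑' n : ℕ, z ^ (n + 1) / ((n:ℂ) + 1) ^ (k + 2)) - z) / ((k:ℂ) + 2))
      = fun k : ℕ => ∑' n : ℕ, b (k, n) := by
    funext k
    have hs := my_liSummable z hzn k
    rw [Summable.tsum_eq_zero_add hs]
    simp only [Nat.cast_zero, pow_zero, zero_add, pow_one, one_pow, Nat.cast_add, Nat.cast_one]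
    rw [show (fun n : ℕ => z ^ (n + 1 + 1) / ((n:ℂ) + 1 + 1) ^ (k + 2))
        = fun n : ℕ => z ^ (n + 2) / ((n:ℂ) + 2) ^ (k + 2) from funext fun n => by ring_nf]
    rw [div_one, add_sub_cancel_left]
    rw [← tsum_div_const]
    congr 1
    funext n
    have hn2 := my_ne2 n
    rw [hbdef]
    simp only
    rw [div_pow, one_pow]
    ring
  rw [hfk, hTeq, hswap]
  exact H2
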